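/- If a rational matrix R is the product R1·R2 of two rational matrices, then for every nonnegative integer ℓ, the determinantal denominator φ_ℓ(R) divides φ_ℓ(R1)·φ_ℓ(R2). -/

import Mathlib

open Polynomial

noncomputable section

/-- Normalization on a field: every nonzero element normalizes to `1`. -/
noncomputable def fieldNormalizationMonoid (K : Type*) [Field K] : NormalizationMonoid K := by
  classical
  exact
  { normUnit := fun a => if h : a = 0 then 1 else (Units.mk0 a h)⁻¹
    normUnit_zero := dif_pos rfl
    normUnit_one := by
      rw [dif_neg one_ne_zero]
      exact Units.ext (by simp)
    normUnit_mul_units := fun {a} u ha => by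
      rw [dif_neg (mul_ne_zero ha u.ne_zero), dif_neg ha]
      apply Units.ext
      simp only [Units.val_inv_eq_inv_val, Units.val_mk0, Units.val_mul]
      rw [mul_inv_rev] }

attribute [local instance] fieldNormalizationMonoid

noncomputable local instance (K : Type*) [Field K] : NormalizedGCDMonoid (Polynomial K) :=
  UniqueFactorizationMonoid.toNormalizedGCDMonoid _

variable {k : Type*} [Field k] [CharZero k]

/-- The ℓ-th determinantal denominator of a rational matrix: the monic least common
denominator of all minors of size at most ℓ. -/
def detDen {n p : ℕ} (R : Matrix (Fin n) (Fin p) (RatFunc k)) (ℓ : ℕ) : Polynomial k :=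
  (Finset.range (ℓ + 1)).lcm fun i =>
    (Finset.univ : Finset ((Fin i ↪ Fin n) × (Fin i ↪ Fin p))).lcm fun fg =>
      (Matrix.det fun a b => R (fg.1 a) (fg.2 b)).denom

section CauchyBinet

open Finset Equiv Equiv.Perm Matrix

variable {A : Type*} [CommRing A] {r m' : ℕ}

private lemma cb_aux (M : Matrix (Fin r) (Fin m') A) (N : Matrix (Fin m') (Fin r) A)
    {q : Fin r → Fin m'} (H : ¬ Function.Injective q) :
    (∑ σ : Perm (Fin r), Perm.sign σ • ∏ x, M (σ x) (q x) * N (q x) x) = 0 := by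
  obtain ⟨i, j, hqij, hij⟩ : ∃ i j, q i = q j ∧ i ≠ j := by
    rw [Function.Injective] at H
    push_neg at H
    obtain ⟨i, j, h1, h2⟩ := H
    exact ⟨i, j, h1, h2⟩
  exact
    Finset.sum_involution (fun σ _ => σ * Equiv.swap i j)
      (fun σ _ => by
        have : (∏ x, M (σ x) (q x)) = ∏ x, M ((σ * Equiv.swap i j) x) (q x) :=
          Fintype.prod_equiv (Equiv.swap i j) _ _ (by simp [Equiv.apply_swap_eq_self hqij])
        simp [this, sign_swap hij, -sign_swap', Finset.prod_mul_distrib])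
      (fun σ _ _ => (not_congr Equiv.mul_swap_eq_iff).mpr hij) (fun _ _ => Finset.mem_univ _)
      fun σ _ => Equiv.mul_swap_involutive i j σ

/-- A compose-with-permutation equivalence on embeddings. -/
private def permCompEquiv (τ : Perm (Fin r)) : (Fin r ↪ Fin m') ≃ (Fin r ↪ Fin m') where
  toFun e := τ.toEmbedding.trans e
  invFun e := τ.symm.toEmbedding.trans e
  left_inv e := by ext x; simp
  right_inv e := by ext x; simp

/-- Cauchy–Binet, averaged form: `r! * det (M * N)` equals the sum over all embeddings
`e : Fin r ↪ Fin m'` of the product of the corresponding minors. -/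
private theorem cauchy_binet_factorial (M : Matrix (Fin r) (Fin m') A)
    (N : Matrix (Fin m') (Fin r) A) :
    (r.factorial : A) * (M * N).det =
      ∑ e : Fin r ↪ Fin m', (M.submatrix id ⇑e).det * (N.submatrix ⇑e id).det := by
  classical
  have step1 : (M * N).det =
      ∑ q : Fin r → Fin m', ∑ σ : Perm (Fin r),
        Perm.sign σ • ∏ i, M (σ i) (q i) * N (q i) i := by
    simp only [det_apply', Matrix.mul_apply, Finset.prod_univ_sum, Finset.mul_sum,
      Fintype.piFinset_univ, Units.smul_def, zsmul_eq_mul]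
    rw [Finset.sum_comm]
  have step2 : (M * N).det =
      ∑ q ∈ Finset.univ.filter (fun q : Fin r → Fin m' => Function.Injective q),
        ∑ σ : Perm (Fin r), Perm.sign σ • ∏ i, M (σ i) (q i) * N (q i) i := by
    rw [step1]
    refine (Finset.sum_subset (Finset.filter_subset _ _) fun q _ hq => ?_).symm
    refine cb_aux M N ?_
    simpa using hq
  have hF : ∀ q : Fin r → Fin m',
      (∑ σ : Perm (Fin r), Perm.sign σ • ∏ i, M (σ i) (q i) * N (q i) i) =
        (M.submatrix id q).det * ∏ i, N (q i) i := by
    intro q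
    rw [det_apply', Finset.sum_mul]
    refine Finset.sum_congr rfl fun σ _ => ?_
    simp only [Finset.prod_mul_distrib, submatrix_apply, id_eq, Units.smul_def, zsmul_eq_mul]
    ring
  have step3 : (M * N).det =
      ∑ e : Fin r ↪ Fin m', (M.submatrix id ⇑e).det * ∏ i, N (e i) i := by
    rw [step2]
    rw [Finset.sum_subtype (Finset.univ.filter fun q : Fin r → Fin m' => Function.Injective q)
      (p := fun q : Fin r → Fin m' => Function.Injective q) (by simp)]
    rw [← Equiv.sum_comp (Equiv.subtypeInjectiveEquivEmbedding (Fin r) (Fin m')).symm]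
    refine Finset.sum_congr rfl fun e _ => ?_
    rw [hF]
    rfl
  rw [step3, Finset.mul_sum]
  -- now average over permutations
  have hcard : (r.factorial : A) = ∑ _τ : Perm (Fin r), (1 : A) := by
    simp [Finset.card_univ, Fintype.card_perm]
  calc
    ∑ e : Fin r ↪ Fin m', (r.factorial : A) * ((M.submatrix id ⇑e).det * ∏ i, N (e i) i)
        = ∑ e : Fin r ↪ Fin m', ∑ τ : Perm (Fin r),
            (M.submatrix id ⇑e).det * ∏ i, N (e i) i := by
          refine Finset.sum_congr rfl fun e _ => ?_
          rw [hcard, Finset.sum_mul]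
          simp
    _ = ∑ τ : Perm (Fin r), ∑ e : Fin r ↪ Fin m',
          (M.submatrix id ⇑e).det * ∏ i, N (e i) i := Finset.sum_comm
    _ = ∑ τ : Perm (Fin r), ∑ e : Fin r ↪ Fin m',
          (M.submatrix id ⇑(permCompEquiv τ e)).det * ∏ i, N (permCompEquiv τ e i) i := by
          refine Finset.sum_congr rfl fun τ _ => ?_
          exact (Equiv.sum_comp (permCompEquiv τ) _).symm
    _ = ∑ e : Fin r ↪ Fin m', ∑ τ : Perm (Fin r),
          (M.submatrix id ⇑(permCompEquiv τ e)).det * ∏ i, N (e (τ i)) i := Finset.sum_comm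
    _ = ∑ e : Fin r ↪ Fin m', (M.submatrix id ⇑e).det * (N.submatrix ⇑e id).det := by
          refine Finset.sum_congr rfl fun e _ => ?_
          rw [det_apply' (N.submatrix ⇑e id), Finset.mul_sum]
          refine Finset.sum_congr rfl fun τ _ => ?_
          have h1 : (M.submatrix id ⇑(permCompEquiv τ e)) =
              (M.submatrix id ⇑e).submatrix id ⇑τ := by
            ext a b; rfl
          rw [h1, det_permute']
          simp only [submatrix_apply, id_eq, Units.smul_def, zsmul_eq_mul]
          ring

end CauchyBinet

section DenomLemmas

open RatFunc

variable {K : Type*} [Field K]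

private lemma exists_div_of_denom_dvd {x : RatFunc K} {d : Polynomial K} (hd : d ≠ 0)
    (h : x.denom ∣ d) : ∃ q : Polynomial K, x = algebraMap _ _ q / algebraMap _ _ d :=
  (RatFunc.denom_dvd hd).mp h

private lemma P_mul {x y : RatFunc K} {d₁ d₂ : Polynomial K}
    (hx : ∃ q, x = algebraMap (Polynomial K) (RatFunc K) q / algebraMap (Polynomial K) (RatFunc K) d₁)
    (hy : ∃ q, y = algebraMap (Polynomial K) (RatFunc K) q / algebraMap (Polynomial K) (RatFunc K) d₂) :
    ∃ q, x * y = algebraMap (Polynomial K) (RatFunc K) q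
      / algebraMap (Polynomial K) (RatFunc K) (d₁ * d₂) := by
  obtain ⟨q₁, rfl⟩ := hx
  obtain ⟨q₂, rfl⟩ := hy
  exact ⟨q₁ * q₂, by rw [map_mul, map_mul, div_mul_div_comm]⟩

private lemma P_sum {ι : Type*} (s : Finset ι) (f : ι → RatFunc K) {d : Polynomial K}
    (h : ∀ i ∈ s, ∃ q, f i = algebraMap (Polynomial K) (RatFunc K) q
      / algebraMap (Polynomial K) (RatFunc K) d) :
    ∃ q, (∑ i ∈ s, f i) = algebraMap (Polynomial K) (RatFunc K) q
      / algebraMap (Polynomial K) (RatFunc K) d := by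
  classical
  induction s using Finset.induction_on with
  | empty => exact ⟨0, by simp⟩
  | insert a s hnot ih =>
    obtain ⟨q₁, hq₁⟩ := h a (Finset.mem_insert_self a s)
    obtain ⟨q₂, hq₂⟩ := ih fun i hi => h i (Finset.mem_insert_of_mem hi)
    refine ⟨q₁ + q₂, ?_⟩
    rw [Finset.sum_insert hnot, hq₁, hq₂, map_add, add_div]

end DenomLemmas

private lemma detDen_ne_zero {n p : ℕ} (R : Matrix (Fin n) (Fin p) (RatFunc k)) (ℓ : ℕ) :
    detDen R ℓ ≠ 0 := by
  rw [detDen, Ne, Finset.lcm_eq_zero_iff]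
  rintro ⟨i, -, hi⟩
  have hi' : (Finset.univ : Finset ((Fin i ↪ Fin n) × (Fin i ↪ Fin p))).lcm (fun fg =>
      (Matrix.det fun a b => R (fg.1 a) (fg.2 b)).denom) = 0 := hi
  rw [Finset.lcm_eq_zero_iff] at hi'
  obtain ⟨fg, -, hfg⟩ := hi'
  exact RatFunc.denom_ne_zero _ hfg

private lemma denom_minor_dvd_detDen {n p : ℕ} (R : Matrix (Fin n) (Fin p) (RatFunc k))
    {ℓ i : ℕ} (hi : i ≤ ℓ) (f : Fin i ↪ Fin n) (g : Fin i ↪ Fin p) :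
    (Matrix.det fun a b => R (f a) (g b)).denom ∣ detDen R ℓ := by
  refine dvd_trans ?_ (Finset.dvd_lcm (f := fun j =>
    (Finset.univ : Finset ((Fin j ↪ Fin n) × (Fin j ↪ Fin p))).lcm fun fg =>
      (Matrix.det fun a b => R (fg.1 a) (fg.2 b)).denom)
    (Finset.mem_range.mpr (Nat.lt_succ_of_le hi)))
  exact Finset.dvd_lcm (f := fun fg : (Fin i ↪ Fin n) × (Fin i ↪ Fin p) =>
    (Matrix.det fun a b => R (fg.1 a) (fg.2 b)).denom) (s := Finset.univ) (b := (f, g)) (Finset.mem_univ _)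

/-- If `R = R1 * R2`, then for every `ℓ`, `φ_ℓ(R) ∣ φ_ℓ(R1) * φ_ℓ(R2)`. -/
theorem detDen_mul_dvd {n m p : ℕ} (R : Matrix (Fin n) (Fin p) (RatFunc k))
    (R1 : Matrix (Fin n) (Fin m) (RatFunc k)) (R2 : Matrix (Fin m) (Fin p) (RatFunc k))
    (hR : R = R1 * R2) (ℓ : ℕ) :
    detDen R ℓ ∣ detDen R1 ℓ * detDen R2 ℓ := by
  classical
  set D := detDen R1 ℓ * detDen R2 ℓ with hD
  have hD0 : D ≠ 0 := mul_ne_zero (detDen_ne_zero R1 ℓ) (detDen_ne_zero R2 ℓ)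
  rw [detDen]
  refine Finset.lcm_dvd fun i hi => ?_
  refine Finset.lcm_dvd fun fg _ => ?_
  rw [Finset.mem_range, Nat.lt_succ_iff] at hi
  obtain ⟨f, g⟩ := fg
  set M : Matrix (Fin i) (Fin m) (RatFunc k) := R1.submatrix ⇑f id with hM
  set N : Matrix (Fin m) (Fin i) (RatFunc k) := R2.submatrix id ⇑g with hN
  have hdet : (Matrix.det fun a b => R (f a) (g b)) = (M * N).det := by
    congr 1
    ext a b
    simp [hR, Matrix.mul_apply, hM, hN]
  rw [hdet]
  have hterm : ∀ e : Fin i ↪ Fin m,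
      ∃ q, (M.submatrix id ⇑e).det * (N.submatrix ⇑e id).det
        = algebraMap (Polynomial k) (RatFunc k) q / algebraMap _ _ D := by
    intro e
    refine P_mul ?_ ?_
    · refine exists_div_of_denom_dvd (detDen_ne_zero R1 ℓ) ?_
      have h1 : (M.submatrix id ⇑e) = fun a b => R1 (f a) (e b) := by
        ext a b; simp [hM]
      rw [h1]
      exact denom_minor_dvd_detDen R1 hi f e
    · refine exists_div_of_denom_dvd (detDen_ne_zero R2 ℓ) ?_
      have h2 : (N.submatrix ⇑e id) = fun a b => R2 (e a) (g b) := by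
        ext a b; simp [hN]
      rw [h2]
      exact denom_minor_dvd_detDen R2 hi e g
  obtain ⟨q, hq⟩ := P_sum Finset.univ _ fun e _ => hterm e
  have hcb := cauchy_binet_factorial M N
  rw [hq] at hcb
  set c : k := (i.factorial : k) with hc
  have hc0 : c ≠ 0 := Nat.cast_ne_zero.mpr i.factorial_ne_zero
  have hcast : (i.factorial : RatFunc k)
      = algebraMap (Polynomial k) (RatFunc k) (Polynomial.C c) := by
    rw [hc, Polynomial.C_eq_natCast, map_natCast]
  have hc' : algebraMap (Polynomial k) (RatFunc k) (Polynomial.C c⁻¹)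
      * algebraMap (Polynomial k) (RatFunc k) (Polynomial.C c) = 1 := by
    rw [← map_mul, ← Polynomial.C_mul, inv_mul_cancel₀ hc0, Polynomial.C_1, map_one]
  refine (RatFunc.denom_dvd hD0).mpr ⟨Polynomial.C c⁻¹ * q, ?_⟩
  calc (M * N).det
      = (algebraMap (Polynomial k) (RatFunc k) (Polynomial.C c⁻¹)
          * algebraMap (Polynomial k) (RatFunc k) (Polynomial.C c)) * (M * N).det := by
        rw [hc', one_mul]
    _ = algebraMap (Polynomial k) (RatFunc k) (Polynomial.C c⁻¹)
          * ((i.factorial : RatFunc k) * (M * N).det) := by rw [hcast, mul_assoc]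
    _ = algebraMap (Polynomial k) (RatFunc k) (Polynomial.C c⁻¹)
          * (algebraMap (Polynomial k) (RatFunc k) q / algebraMap _ _ D) := by rw [hcb]
    _ = algebraMap (Polynomial k) (RatFunc k) (Polynomial.C c⁻¹ * q) / algebraMap _ _ D := by
        rw [map_mul (algebraMap (Polynomial k) (RatFunc k)) (Polynomial.C c⁻¹) q,
          mul_div_assoc]
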